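/- For 1 < p ≤ 2 there is a constant C = C_p such that for all vectors x, y, z ∈ ℝ^N: | |x+y|^p - p|x|^{p-2}⟨x,y⟩ - |x+z|^p + p|x|^{p-2}⟨x,z⟩ | ≤ C(|y|^{p-1} + |z|^{p-1})|y - z|. -/

import Mathlib

open Real

section aux

variable {E : Type*} [NormedAddCommGroup E] [InnerProductSpace ℝ E]

lemma aux_rpow_add_le {a b e : ℝ} (ha : 0 ≤ a) (hb : 0 ≤ b) (he : 0 ≤ e) (he1 : e ≤ 1) :
    (a + b) ^ e ≤ a ^ e + b ^ e := by
  have h := NNReal.rpow_add_le_add_rpow a.toNNReal b.toNNReal he he1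
  have h2 := (NNReal.coe_le_coe).2 h
  push_cast at h2
  rwa [Real.coe_toNNReal a ha, Real.coe_toNNReal b hb] at h2

lemma aux_norm_g {p : ℝ} (hp1 : 1 < p) (v : E) :
    ‖(‖v‖ ^ (p - 2)) • v‖ = ‖v‖ ^ (p - 1) := by
  rcases eq_or_ne v 0 with rfl | hv
  · simp [Real.zero_rpow (by intro h; linarith [sub_eq_zero.mp h] : p - 1 ≠ 0)]
  · rw [norm_smul, Real.norm_eq_abs, abs_of_nonneg (Real.rpow_nonneg (norm_nonneg v) _),
      ← Real.rpow_add_one (norm_ne_zero_iff.mpr hv)]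
    congr 1; ring

lemma aux_g_le {p : ℝ} (hp1 : 1 < p) (hp2 : p ≤ 2) (a b : E) (hab : ‖b‖ ≤ ‖a‖) :
    ‖(‖a‖ ^ (p - 2)) • a - (‖b‖ ^ (p - 2)) • b‖ ≤ 2 * ‖a - b‖ ^ (p - 1) := by
  have hp1' : (0 : ℝ) ≤ p - 1 := by linarith
  have hp2' : p - 2 ≤ 0 := by linarith
  rcases eq_or_ne a b with rfl | hne
  · simp only [sub_self, norm_zero]
    positivity
  have hd0 : (0 : ℝ) < ‖a - b‖ := by
    rw [norm_pos_iff]; exact sub_ne_zero.mpr hne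
  set d := ‖a - b‖ with hd
  rcases le_or_gt ‖a‖ d with h | h
  · calc ‖(‖a‖ ^ (p - 2)) • a - (‖b‖ ^ (p - 2)) • b‖
        ≤ ‖(‖a‖ ^ (p - 2)) • a‖ + ‖(‖b‖ ^ (p - 2)) • b‖ := norm_sub_le _ _
      _ = ‖a‖ ^ (p - 1) + ‖b‖ ^ (p - 1) := by rw [aux_norm_g hp1, aux_norm_g hp1]
      _ ≤ d ^ (p - 1) + d ^ (p - 1) :=
          add_le_add (Real.rpow_le_rpow (norm_nonneg a) h hp1')
            (Real.rpow_le_rpow (norm_nonneg b) (hab.trans h) hp1')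
      _ = 2 * d ^ (p - 1) := by ring
  · have ha0 : (0 : ℝ) < ‖a‖ := hd0.trans h
    have key : (‖a‖ ^ (p - 2)) • a - (‖b‖ ^ (p - 2)) • b
        = (‖a‖ ^ (p - 2)) • (a - b) + (‖a‖ ^ (p - 2) - ‖b‖ ^ (p - 2)) • b := by
      module
    rw [key]
    have t1 : ‖(‖a‖ ^ (p - 2)) • (a - b)‖ ≤ d ^ (p - 1) := by
      rw [norm_smul, Real.norm_eq_abs, abs_of_nonneg (Real.rpow_nonneg (norm_nonneg a) _), ← hd]
      have h1 : ‖a‖ ^ (p - 2) ≤ d ^ (p - 2) :=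
        Real.rpow_le_rpow_of_nonpos hd0 h.le hp2'
      calc ‖a‖ ^ (p - 2) * d ≤ d ^ (p - 2) * d :=
            mul_le_mul_of_nonneg_right h1 hd0.le
        _ = d ^ (p - 1) := by
            rw [← Real.rpow_add_one hd0.ne']; congr 1; ring
    have t2 : ‖(‖a‖ ^ (p - 2) - ‖b‖ ^ (p - 2)) • b‖ ≤ d ^ (p - 1) := by
      rcases eq_or_ne b 0 with rfl | hb
      · simp only [norm_zero, smul_zero]
        positivity
      have hb0 : (0 : ℝ) < ‖b‖ := norm_pos_iff.mpr hb
      have hsle : ‖a‖ ^ (p - 2) ≤ ‖b‖ ^ (p - 2) :=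
        Real.rpow_le_rpow_of_nonpos hb0 hab hp2'
      rw [norm_smul, Real.norm_eq_abs, abs_of_nonpos (by linarith), neg_sub]
      rcases eq_or_lt_of_le hab with heq | hlt
      · rw [heq]
        simp only [sub_self, zero_mul]
        positivity
      · have hst : (0 : ℝ) < ‖a‖ - ‖b‖ := sub_pos.mpr hlt
        have hstd : ‖a‖ - ‖b‖ ≤ d := norm_sub_norm_le a b
        have e1 : (‖b‖ ^ (p - 2) - ‖a‖ ^ (p - 2)) * ‖b‖
            = (‖b‖ ^ (p - 1) - ‖a‖ ^ (p - 1)) + ‖a‖ ^ (p - 2) * (‖a‖ - ‖b‖) := by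
          rw [show p - 1 = (p - 2) + 1 by ring, Real.rpow_add_one hb0.ne',
            Real.rpow_add_one ha0.ne']
          ring
        rw [e1]
        have e2 : ‖b‖ ^ (p - 1) - ‖a‖ ^ (p - 1) ≤ 0 :=
          sub_nonpos.mpr (Real.rpow_le_rpow (norm_nonneg b) hlt.le hp1')
        have e3 : ‖a‖ ^ (p - 2) * (‖a‖ - ‖b‖) ≤ (‖a‖ - ‖b‖) ^ (p - 1) := by
          have h1 : ‖a‖ ^ (p - 2) ≤ (‖a‖ - ‖b‖) ^ (p - 2) :=
            Real.rpow_le_rpow_of_nonpos hst (by linarith [norm_nonneg b]) hp2'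
          calc ‖a‖ ^ (p - 2) * (‖a‖ - ‖b‖) ≤ (‖a‖ - ‖b‖) ^ (p - 2) * (‖a‖ - ‖b‖) :=
                mul_le_mul_of_nonneg_right h1 hst.le
            _ = (‖a‖ - ‖b‖) ^ (p - 1) := by
                rw [show p - 1 = (p - 2) + 1 by ring, Real.rpow_add_one hst.ne']
        have e4 : (‖a‖ - ‖b‖) ^ (p - 1) ≤ d ^ (p - 1) :=
          Real.rpow_le_rpow hst.le hstd hp1'
        linarith
    calc ‖(‖a‖ ^ (p - 2)) • (a - b) + (‖a‖ ^ (p - 2) - ‖b‖ ^ (p - 2)) • b‖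
        ≤ ‖(‖a‖ ^ (p - 2)) • (a - b)‖ + ‖(‖a‖ ^ (p - 2) - ‖b‖ ^ (p - 2)) • b‖ := norm_add_le _ _
      _ ≤ d ^ (p - 1) + d ^ (p - 1) := add_le_add t1 t2
      _ = 2 * d ^ (p - 1) := by ring

lemma aux_g {p : ℝ} (hp1 : 1 < p) (hp2 : p ≤ 2) (a b : E) :
    ‖(‖a‖ ^ (p - 2)) • a - (‖b‖ ^ (p - 2)) • b‖ ≤ 2 * ‖a - b‖ ^ (p - 1) := by
  rcases le_total ‖b‖ ‖a‖ with h | h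
  · exact aux_g_le hp1 hp2 a b h
  · rw [norm_sub_rev, norm_sub_rev a b]
    exact aux_g_le hp1 hp2 b a h

end aux

/-- For `1 < p ≤ 2` there is `C = C_p` such that for all `x, y, z ∈ ℝ^N`:
`| ‖x+y‖^p - p‖x‖^(p-2)⟪x,y⟫ - ‖x+z‖^p + p‖x‖^(p-2)⟪x,z⟫ | ≤ C(‖y‖^(p-1)+‖z‖^(p-1))‖y-z‖`. -/
theorem stmt_7 (N : ℕ) (hN : 0 < N) (p : ℝ) (hp1 : 1 < p) (hp2 : p ≤ 2) :
    ∃ C : ℝ, 0 < C ∧ ∀ x y z : EuclideanSpace ℝ (Fin N),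
      |‖x + y‖ ^ p - p * ‖x‖ ^ (p - 2) * (inner ℝ x y : ℝ)
        - ‖x + z‖ ^ p + p * ‖x‖ ^ (p - 2) * (inner ℝ x z : ℝ)|
        ≤ C * (‖y‖ ^ (p - 1) + ‖z‖ ^ (p - 1)) * ‖y - z‖ := by
  have hp0 : (0 : ℝ) < p := by linarith
  refine ⟨2 * p, by linarith, fun x y z => ?_⟩
  let E := EuclideanSpace ℝ (Fin N)
  set F : E → ℝ := fun w => ‖x + w‖ ^ p - p * ‖x‖ ^ (p - 2) * (inner ℝ x w : ℝ) with hF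
  set F' : E → (E →L[ℝ] ℝ) := fun w =>
    ((p * ‖x + w‖ ^ (p - 2)) • innerSL ℝ (x + w)) - ((p * ‖x‖ ^ (p - 2)) • innerSL ℝ x) with hF'
  have hder : ∀ w : E, HasFDerivAt F (F' w) w := by
    intro w
    have h1 : HasFDerivAt (fun w : E => ‖x + w‖ ^ p)
        ((p * ‖x + w‖ ^ (p - 2)) • innerSL ℝ (x + w)) w := by
      have := (hasFDerivAt_norm_rpow (x + w) hp1).comp w ((hasFDerivAt_id w).const_add x)
      simpa [Function.comp_def] using this
    have h2 : HasFDerivAt (fun w : E => p * ‖x‖ ^ (p - 2) * (inner ℝ x w : ℝ))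
        ((p * ‖x‖ ^ (p - 2)) • innerSL ℝ x) w := by
      exact ((innerSL ℝ x).hasFDerivAt).const_mul _
    exact h1.sub h2
  have hbound : ∀ w : E, ‖F' w‖ ≤ 2 * p * ‖w‖ ^ (p - 1) := by
    intro w
    have heq : F' w = innerSL ℝ (p • ((‖x + w‖ ^ (p - 2)) • (x + w) - (‖x‖ ^ (p - 2)) • x)) := by
      rw [hF']
      simp only [map_smul, map_sub, smul_sub, smul_smul]
    rw [heq, innerSL_apply_norm, norm_smul, Real.norm_eq_abs, abs_of_pos hp0]
    have := aux_g hp1 hp2 (x + w) x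
    rw [add_sub_cancel_left] at this
    calc p * ‖(‖x + w‖ ^ (p - 2)) • (x + w) - (‖x‖ ^ (p - 2)) • x‖
        ≤ p * (2 * ‖w‖ ^ (p - 1)) := by
          exact mul_le_mul_of_nonneg_left this hp0.le
      _ = 2 * p * ‖w‖ ^ (p - 1) := by ring
  have hseg : ∀ w ∈ segment ℝ z y, ‖F' w‖ ≤ 2 * p * (‖y‖ ^ (p - 1) + ‖z‖ ^ (p - 1)) := by
    rintro w ⟨a, b, ha, hb, hab, rfl⟩
    have hw : ‖a • z + b • y‖ ≤ ‖y‖ + ‖z‖ := by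
      calc ‖a • z + b • y‖ ≤ ‖a • z‖ + ‖b • y‖ := norm_add_le _ _
        _ = a * ‖z‖ + b * ‖y‖ := by
            rw [norm_smul, norm_smul, Real.norm_eq_abs, Real.norm_eq_abs,
              abs_of_nonneg ha, abs_of_nonneg hb]
        _ ≤ ‖y‖ + ‖z‖ := by
            nlinarith [norm_nonneg y, norm_nonneg z]
    calc ‖F' (a • z + b • y)‖ ≤ 2 * p * ‖a • z + b • y‖ ^ (p - 1) := hbound _
      _ ≤ 2 * p * (‖y‖ + ‖z‖) ^ (p - 1) := by
          have := Real.rpow_le_rpow (norm_nonneg _) hw (by linarith : (0:ℝ) ≤ p - 1)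
          nlinarith
      _ ≤ 2 * p * (‖y‖ ^ (p - 1) + ‖z‖ ^ (p - 1)) := by
          have := aux_rpow_add_le (norm_nonneg y) (norm_nonneg z)
            (by linarith : (0:ℝ) ≤ p - 1) (by linarith : p - 1 ≤ 1)
          nlinarith
  have := (convex_segment z y).norm_image_sub_le_of_norm_hasFDerivWithin_le
    (fun w hw => (hder w).hasFDerivWithinAt) hseg
    (left_mem_segment ℝ z y) (right_mem_segment ℝ z y)
  have heq : ‖x + y‖ ^ p - p * ‖x‖ ^ (p - 2) * (inner ℝ x y : ℝ)
      - ‖x + z‖ ^ p + p * ‖x‖ ^ (p - 2) * (inner ℝ x z : ℝ) = F y - F z := by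
    rw [hF]; ring
  rw [heq, ← Real.norm_eq_abs]
  linarith [this]
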